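/- Let u, v be unitaries on H, q ∈ 𝕋 with ‖vu - q·uv‖ ≤ δ, and N a positive integer. Then ‖v - (1/(2N+1)) ∑_{k=-N}^{N} q^k u^k v u^{-k}‖ ≤ (N(N+1)/(2N+1))·δ < ((N+1)/2)·δ. -/

import Mathlib

/-- Integer powers of an operator `u`, where for `k < 0` we use `(u*)^(-k)` (appropriate when `u`
is unitary). -/
noncomputable def opZpow {H : Type*} [NormedAddCommGroup H] [InnerProductSpace ℂ H]
    [CompleteSpace H] (u : H →L[ℂ] H) : ℤ → (H →L[ℂ] H)
  | Int.ofNat n => u ^ n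
  | Int.negSucc n => (star u) ^ (n + 1)

section aux
variable {H : Type*} [NormedAddCommGroup H] [InnerProductSpace ℂ H] [CompleteSpace H]

lemma opZpow_natCast (u : H →L[ℂ] H) (n : ℕ) : opZpow u (n : ℤ) = u ^ n := rfl

lemma opZpow_neg_natCast (u : H →L[ℂ] H) (n : ℕ) : opZpow u (-(n : ℤ)) = (star u) ^ n := by
  cases n with
  | zero => rfl
  | succ m => rfl

lemma sum_abs_Icc (N : ℕ) : ∑ k ∈ Finset.Icc (-(N : ℤ)) (N : ℤ), |k| = N * (N + 1) := by
  induction N with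
  | zero => simp
  | succ n ih =>
    have hset : Finset.Icc (-(n + 1 : ℕ) : ℤ) ((n + 1 : ℕ) : ℤ)
        = insert (-(n + 1 : ℕ) : ℤ) (insert ((n + 1 : ℕ) : ℤ)
            (Finset.Icc (-(n : ℕ) : ℤ) (n : ℤ))) := by
      ext k; simp only [Finset.mem_Icc, Finset.mem_insert]; omega
    rw [hset, Finset.sum_insert (by simp only [Finset.mem_Icc, Finset.mem_insert]; omega),
      Finset.sum_insert (by simp only [Finset.mem_Icc]; omega), ih]
    push_cast
    rw [abs_neg, abs_of_nonneg (by positivity)]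
    ring

end aux

/-- If `u, v` are unitaries, `|q| = 1`, `‖vu - q·uv‖ ≤ δ` and `N ≥ 1`, then
`‖v - (1/(2N+1)) ∑_{k=-N}^{N} q^k u^k v u^{-k}‖ ≤ (N(N+1)/(2N+1))·δ`, and (for `δ > 0`)
`(N(N+1)/(2N+1))·δ < ((N+1)/2)·δ`. -/
theorem stmt_2 {H : Type*} [NormedAddCommGroup H] [InnerProductSpace ℂ H] [CompleteSpace H]
    (q : ℂ) (hq : ‖q‖ = 1) (δ : ℝ) (hδ : 0 ≤ δ) (u v : H →L[ℂ] H)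
    (hu : u ∈ unitary (H →L[ℂ] H)) (hv : v ∈ unitary (H →L[ℂ] H))
    (h : ‖v * u - q • (u * v)‖ ≤ δ) (N : ℕ) (hN : 1 ≤ N) :
    ‖v - ((2 * (N : ℂ) + 1)⁻¹) •
        ∑ k ∈ Finset.Icc (-(N : ℤ)) (N : ℤ), q ^ k • (opZpow u k * v * opZpow u (-k))‖
      ≤ ((N : ℝ) * (N + 1) / (2 * N + 1)) * δ ∧
    (0 < δ → ((N : ℝ) * (N + 1) / (2 * N + 1)) * δ < (((N : ℝ) + 1) / 2) * δ) := by
  have hsu : star u ∈ unitary (H →L[ℂ] H) := Unitary.star_mem hu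
  have huu : star u * u = 1 := hu.1
  have huu' : u * star u = 1 := hu.2
  have hqq : q * star q = 1 := by
    rw [Complex.star_def, Complex.mul_conj]
    norm_cast
    simp [Complex.normSq_eq_norm_sq, hq]
  have hqinv : q⁻¹ = star q := inv_eq_of_mul_eq_one_right hqq
  have hsq : ‖star q‖ = 1 := by rw [norm_star, hq]
  -- key one-step bounds
  have hD : ‖v - q • (u * v * star u)‖ ≤ δ := by
    have e : (v - q • (u * v * star u)) * u = v * u - q • (u * v) := by
      simp [sub_mul, smul_mul_assoc, mul_assoc, huu]
    calc ‖v - q • (u * v * star u)‖ = ‖(v - q • (u * v * star u)) * u‖ :=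
          (CStarRing.norm_mul_mem_unitary _ hu).symm
      _ ≤ δ := by rw [e]; exact h
  have hE : ‖v - star q • (star u * v * u)‖ ≤ δ := by
    have e : u * (v - star q • (star u * v * u)) = star q • (q • (u * v) - v * u) := by
      have hqq' : (starRingEnd ℂ) q * q = 1 := by rw [mul_comm]; exact hqq
      simp [mul_sub, mul_smul_comm, smul_sub, smul_smul, hqq, hqq', ← mul_assoc, huu']
    calc ‖v - star q • (star u * v * u)‖ = ‖u * (v - star q • (star u * v * u))‖ :=
          (CStarRing.norm_mem_unitary_mul _ hu).symm
      _ = ‖q • (u * v) - v * u‖ := by rw [e, norm_smul, hsq, one_mul]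
      _ = ‖v * u - q • (u * v)‖ := by rw [← norm_neg]; congr 1; abel
      _ ≤ δ := h
  -- positive powers
  have keyP : ∀ n : ℕ, ‖v - q ^ n • (u ^ n * v * (star u) ^ n)‖ ≤ n * δ := by
    intro n
    induction n with
    | zero => simp
    | succ n ih =>
      have hid : v - q ^ (n + 1) • (u ^ (n + 1) * v * (star u) ^ (n + 1))
          = (v - q ^ n • (u ^ n * v * (star u) ^ n))
            + q ^ n • (u ^ n * (v - q • (u * v * star u)) * (star u) ^ n) := by
        rw [pow_succ q, pow_succ u, pow_succ' (star u)]
        simp only [mul_sub, sub_mul, smul_sub, mul_smul_comm, smul_mul_assoc, smul_smul,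
          mul_assoc]
        abel
      calc ‖v - q ^ (n + 1) • (u ^ (n + 1) * v * (star u) ^ (n + 1))‖
          ≤ ‖v - q ^ n • (u ^ n * v * (star u) ^ n)‖
            + ‖q ^ n • (u ^ n * (v - q • (u * v * star u)) * (star u) ^ n)‖ := by
            rw [hid]; exact norm_add_le _ _
        _ ≤ n * δ + δ := by
            refine add_le_add ih ?_
            rw [norm_smul, norm_pow, hq, one_pow, one_mul,
              CStarRing.norm_mul_mem_unitary _ (pow_mem hsu n), CStarRing.norm_mem_unitary_mul _ (pow_mem hu n)]
            exact hD
        _ = ((n + 1 : ℕ) : ℝ) * δ := by push_cast; ring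
  -- negative powers
  have keyN : ∀ n : ℕ, ‖v - (star q) ^ n • ((star u) ^ n * v * u ^ n)‖ ≤ n * δ := by
    intro n
    induction n with
    | zero => simp
    | succ n ih =>
      have hid : v - (star q) ^ (n + 1) • ((star u) ^ (n + 1) * v * u ^ (n + 1))
          = (v - (star q) ^ n • ((star u) ^ n * v * u ^ n))
            + (star q) ^ n • ((star u) ^ n * (v - star q • (star u * v * u)) * u ^ n) := by
        rw [pow_succ (star q), pow_succ (star u), pow_succ' u]
        simp only [mul_sub, sub_mul, smul_sub, mul_smul_comm, smul_mul_assoc, smul_smul,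
          mul_assoc]
        abel
      calc ‖v - (star q) ^ (n + 1) • ((star u) ^ (n + 1) * v * u ^ (n + 1))‖
          ≤ ‖v - (star q) ^ n • ((star u) ^ n * v * u ^ n)‖
            + ‖(star q) ^ n • ((star u) ^ n * (v - star q • (star u * v * u)) * u ^ n)‖ := by
            rw [hid]; exact norm_add_le _ _
        _ ≤ n * δ + δ := by
            refine add_le_add ih ?_
            rw [norm_smul, norm_pow, hsq, one_pow, one_mul,
              CStarRing.norm_mul_mem_unitary _ (pow_mem hu n), CStarRing.norm_mem_unitary_mul _ (pow_mem hsu n)]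
            exact hE
        _ = ((n + 1 : ℕ) : ℝ) * δ := by push_cast; ring
  -- combined over ℤ
  have keyZ : ∀ k : ℤ, ‖v - q ^ k • (opZpow u k * v * opZpow u (-k))‖ ≤ (|k| : ℝ) * δ := by
    intro k
    obtain ⟨n, rfl | rfl⟩ := k.eq_nat_or_neg
    · rw [opZpow_natCast, opZpow_neg_natCast, zpow_natCast]
      simpa using keyP n
    · rw [neg_neg, opZpow_natCast, opZpow_neg_natCast, zpow_neg, zpow_natCast, ← inv_pow, hqinv]
      simpa using keyN n
  constructor
  · set S := Finset.Icc (-(N : ℤ)) (N : ℤ) with hS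
    have hScard : (S.card : ℂ) = 2 * (N : ℂ) + 1 := by
      rw [hS, Int.card_Icc]
      have : ((N : ℤ) + 1 - -(N : ℤ)).toNat = 2 * N + 1 := by omega
      rw [this]; push_cast; ring
    have hcast : (2 * (N : ℂ) + 1) = ((2 * N + 1 : ℕ) : ℂ) := by push_cast; ring
    have hne : (2 * (N : ℂ) + 1) ≠ 0 := by
      rw [hcast]; exact Nat.cast_ne_zero.mpr (by omega)
    have hv0 : v = (2 * (N : ℂ) + 1)⁻¹ • ∑ _k ∈ S, v := by
      rw [Finset.sum_const, ← Nat.cast_smul_eq_nsmul ℂ, hScard, smul_smul,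
        inv_mul_cancel₀ hne, one_smul]
    have hrw : v - (2 * (N : ℂ) + 1)⁻¹ • ∑ k ∈ S, q ^ k • (opZpow u k * v * opZpow u (-k))
        = (2 * (N : ℂ) + 1)⁻¹ • ∑ k ∈ S, (v - q ^ k • (opZpow u k * v * opZpow u (-k))) := by
      rw [Finset.sum_sub_distrib, smul_sub, ← hv0]
    rw [hrw, norm_smul]
    have hnormc : ‖(2 * (N : ℂ) + 1)⁻¹‖ = (2 * (N : ℝ) + 1)⁻¹ := by
      rw [norm_inv]
      congr 1
      rw [hcast, RCLike.norm_natCast]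
      push_cast; ring
    rw [hnormc]
    have hsum : ‖∑ k ∈ S, (v - q ^ k • (opZpow u k * v * opZpow u (-k)))‖
        ≤ (N : ℝ) * (N + 1) * δ := by
      calc ‖∑ k ∈ S, (v - q ^ k • (opZpow u k * v * opZpow u (-k)))‖
          ≤ ∑ k ∈ S, (|k| : ℝ) * δ :=
            norm_sum_le_of_le _ fun k _ => keyZ k
        _ = (N : ℝ) * (N + 1) * δ := by
            rw [← Finset.sum_mul]
            congr 1
            have h1 : ((∑ k ∈ S, |k| : ℤ) : ℝ) = (N : ℝ) * (N + 1) := by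
              rw [hS, sum_abs_Icc]; push_cast; ring
            rw [← h1]
            push_cast
            rfl
    calc (2 * (N : ℝ) + 1)⁻¹ * ‖∑ k ∈ S, (v - q ^ k • (opZpow u k * v * opZpow u (-k)))‖
        ≤ (2 * (N : ℝ) + 1)⁻¹ * ((N : ℝ) * (N + 1) * δ) := by
          apply mul_le_mul_of_nonneg_left hsum (by positivity)
      _ = ((N : ℝ) * (N + 1) / (2 * N + 1)) * δ := by ring
  · intro hδ'
    apply mul_lt_mul_of_pos_right _ hδ'
    rw [div_lt_div_iff₀ (by positivity) (by norm_num)]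
    nlinarith [Nat.cast_nonneg (α := ℝ) N]
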